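/- Let 𝒯 = (T_t)_{t≥0} be a C₀-semigroup on a topological vector space X, let h > 0, and let x ∈ X. If x is a frequently hypercyclic vector for the single operator T_h, then x is a frequently hypercyclic vector for the semigroup 𝒯 with respect to upper density: for every nonempty open U ⊆ X, limsup_{T→∞} (1/T)·meas{t ∈ [0,T] : T_t x ∈ U} > 0. -/

import Mathlib

open scoped Classical
open Filter MeasureTheory
open scoped ENNReal NNReal

/-- If `𝒯 = (T_t)_{t≥0}` is a `C₀`-semigroup on a topological vector space `X`, `h > 0` and
`x` is a frequently hypercyclic vector for the single operator `T h`, then `x` is a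
frequently hypercyclic vector for `𝒯` with respect to upper density: for every nonempty
open `U`, `limsup_{T→∞} (1/T)·meas{t ∈ [0,T] : T_t x ∈ U} > 0`. -/
theorem stmt15 {X : Type*} [TopologicalSpace X] [AddCommGroup X] [Module ℂ X]
    [IsTopologicalAddGroup X] [ContinuousSMul ℂ X]
    (T : ℝ → X →L[ℂ] X)
    (hT0 : T 0 = 1)
    (hTadd : ∀ t s : ℝ, 0 ≤ t → 0 ≤ s → T (t + s) = (T t).comp (T s))
    (hTcont : ∀ y : X, ContinuousOn (fun t : ℝ => T t y) (Set.Ici 0))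
    (h : ℝ) (hh : 0 < h) (x : X)
    (hfhc : ∀ U : Set X, IsOpen U → U.Nonempty →
      0 < Filter.atTop.liminf (fun N : ℕ =>
        (((Finset.range N).filter (fun n => ((T h) ^ n) x ∈ U)).card : ℝ) / N)) :
    ∀ U : Set X, IsOpen U → U.Nonempty →
      0 < Filter.atTop.limsup (fun S : ℝ =>
        (volume {t : ℝ | t ∈ Set.Icc 0 S ∧ T t x ∈ U}).toReal / S) := by
  intro U hUopen hUne
  -- power identity
  have hTn : ∀ (n : ℕ) (y : X), ((T h) ^ n) y = T ((n : ℝ) * h) y := by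
    intro n
    induction n with
    | zero => intro y; simp [hT0]
    | succ n ih =>
      intro y
      have h1 : ((T h) ^ (n + 1)) y = ((T h) ^ n) (T h y) := by
        rw [pow_succ]; rfl
      have h3 : ((n : ℝ) + 1) * h = (n : ℝ) * h + h := by ring
      have h2 : T ((n : ℝ) * h + h) = (T ((n : ℝ) * h)).comp (T h) :=
        hTadd _ _ (by positivity) hh.le
      rw [h1, ih (T h y)]
      push_cast
      rw [h3, h2]; rfl
  obtain ⟨y₀, hy₀⟩ := hUne
  -- choose δ
  have hy00 : (fun t : ℝ => T t y₀) 0 ∈ U := by simp [hT0, hy₀]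
  have hc : Filter.Tendsto (fun t : ℝ => T t y₀) (nhdsWithin 0 (Set.Ici 0))
      (nhds ((fun t : ℝ => T t y₀) 0)) := (hTcont y₀) 0 Set.self_mem_Ici
  have hmem : (fun t : ℝ => T t y₀) ⁻¹' U ∈ nhdsWithin (0 : ℝ) (Set.Ici 0) :=
    hc (hUopen.mem_nhds hy00)
  rw [mem_nhdsGE_iff_exists_Icc_subset] at hmem
  obtain ⟨b, hb0, hbsub⟩ := hmem
  set δ : ℝ := min b h with hδdef
  have hδ0 : 0 < δ := lt_min hb0 hh
  have hδh : δ ≤ h := min_le_right _ _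
  have hδU : ∀ s : ℝ, 0 ≤ s → s ≤ δ → T s y₀ ∈ U := by
    intro s hs1 hs2
    exact hbsub ⟨hs1, hs2.trans (min_le_left _ _)⟩
  -- the open orbit set
  set A : Set ℝ := Set.Ioi 0 ∩ (fun t => T t x) ⁻¹' U with hAdef
  have hAopen : IsOpen A :=
    ((hTcont x).mono (Set.Ioi_subset_Ici le_rfl)).isOpen_inter_preimage isOpen_Ioi hUopen
  -- blocks
  set B : ℕ → Set ℝ := fun n => A ∩ Set.Ioo ((n : ℝ) * h) ((n : ℝ) * h + δ) with hBdef
  set C : ℕ → Set ℝ := fun n => (fun s : ℝ => (n : ℝ) * h + s) ⁻¹' (B n) with hCdef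
  have hBopen : ∀ n, IsOpen (B n) := fun n => hAopen.inter isOpen_Ioo
  have hCopen : ∀ n, IsOpen (C n) := fun n => (hBopen n).preimage (continuous_add_left _)
  have hCmem : ∀ (n : ℕ) (s : ℝ), s ∈ C n ↔ (s ∈ Set.Ioo 0 δ ∧ T ((n : ℝ) * h + s) x ∈ U) := by
    intro n s
    have hnh : (0:ℝ) ≤ (n : ℝ) * h := by positivity
    simp only [hCdef, hBdef, hAdef, Set.mem_preimage, Set.mem_inter_iff, Set.mem_Ioi,
      Set.mem_Ioo]
    constructor
    · rintro ⟨⟨-, hTm⟩, h1, h2⟩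
      exact ⟨⟨by linarith, by linarith⟩, hTm⟩
    · rintro ⟨⟨hs0, hsδ⟩, hTm⟩
      exact ⟨⟨by linarith, hTm⟩, by linarith, by linarith⟩
  have hCvol : ∀ n, volume (C n) = volume (B n) := fun n =>
    measure_preimage_add volume _ (B n)
  have hCsub : ∀ n, C n ⊆ Set.Ioo 0 δ := fun n s hs => ((hCmem n s).1 hs).1
  -- counting functions
  set cnt : ℕ → ℝ → ℕ := fun N s =>
    ((Finset.range N).filter (fun n : ℕ => T ((n : ℝ) * h + s) x ∈ U)).card with hcnt
  -- pointwise liminf positivity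
  have hkey : ∀ s ∈ Set.Ioo (0:ℝ) δ,
      0 < Filter.atTop.liminf (fun N : ℕ => ((cnt N s : ℝ)) / N) := by
    rintro s ⟨hs0, hsδ⟩
    have hVopen : IsOpen (T s ⁻¹' U) := hUopen.preimage (T s).continuous
    have hVne : (T s ⁻¹' U).Nonempty := ⟨y₀, hδU s hs0.le hsδ.le⟩
    have hl := hfhc _ hVopen hVne
    have hEq : ∀ N : ℕ, (Finset.range N).filter (fun n : ℕ => ((T h) ^ n) x ∈ T s ⁻¹' U)
        = (Finset.range N).filter (fun n : ℕ => T ((n : ℝ) * h + s) x ∈ U) := by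
      intro N
      ext n
      simp only [Finset.mem_filter, Finset.mem_range, Set.mem_preimage]
      have hadd : T (s + (n : ℝ) * h) = (T s).comp (T ((n : ℝ) * h)) :=
        hTadd s _ hs0.le (by positivity)
      have heq : T ((n : ℝ) * h + s) x = T s (((T h) ^ n) x) := by
        rw [hTn n x, add_comm, hadd]; rfl
      rw [heq]
    rw [hcnt]
    simp only [← hEq]
    exact hl
  -- ENNReal counting functions
  set g : ℕ → ℝ → ℝ≥0∞ := fun N s =>
    (∑ n ∈ Finset.range N, (C n).indicator (1 : ℝ → ℝ≥0∞) s) / N with hg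
  have hgmeas : ∀ N, Measurable (g N) := by
    intro N
    apply Measurable.div_const
    exact Finset.measurable_sum _ fun n _ =>
      measurable_const.indicator (hCopen n).measurableSet
  have hgval : ∀ N, ∀ s ∈ Set.Ioo (0:ℝ) δ, g N s = (cnt N s : ℝ≥0∞) / N := by
    intro N s hs
    have hsum : (∑ n ∈ Finset.range N, (C n).indicator (1 : ℝ → ℝ≥0∞) s)
        = (cnt N s : ℝ≥0∞) := by
      have hcf : cnt N s = ∑ n ∈ Finset.range N,
          if T ((n : ℝ) * h + s) x ∈ U then 1 else 0 := by
        simp only [hcnt]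
        exact Finset.card_filter _ _
      rw [hcf]
      push_cast
      apply Finset.sum_congr rfl
      intro n _
      by_cases hmem : T ((n : ℝ) * h + s) x ∈ U
      · have hC : s ∈ C n := (hCmem n s).2 ⟨hs, hmem⟩
        simp [Set.indicator_apply, hC, hmem]
      · have hC : s ∉ C n := fun hC => hmem ((hCmem n s).1 hC).2
        simp [Set.indicator_apply, hC, hmem]
    rw [hg]
    simp only [hsum]
  -- pointwise liminf of g is positive
  have hgpos : ∀ s ∈ Set.Ioo (0:ℝ) δ,
      0 < Filter.atTop.liminf (fun N : ℕ => g N s) := by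
    intro s hs
    obtain ⟨c, hc0, hcev⟩ : ∃ c : ℝ, 0 < c ∧ ∀ᶠ N in atTop, c < (cnt N s : ℝ) / N := by
      have hl := hkey s hs
      have hbb : Filter.atTop.IsBoundedUnder (· ≥ ·) (fun N : ℕ => ((cnt N s : ℝ)) / N) :=
        isBoundedUnder_of ⟨0, fun N => by positivity⟩
      refine ⟨(Filter.atTop.liminf (fun N : ℕ => ((cnt N s : ℝ)) / N)) / 2, by positivity, ?_⟩
      exact eventually_lt_of_lt_liminf (by linarith) hbb
    have hev : ∀ᶠ N in atTop, ENNReal.ofReal c ≤ g N s := by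
      filter_upwards [hcev, eventually_gt_atTop 0] with N hN hN0
      rw [hgval N s hs]
      have h1 : ENNReal.ofReal c ≤ ENNReal.ofReal ((cnt N s : ℝ) / N) :=
        ENNReal.ofReal_le_ofReal hN.le
      refine h1.trans (le_of_eq ?_)
      rw [ENNReal.ofReal_div_of_pos (by exact_mod_cast hN0)]
      simp [ENNReal.ofReal_natCast]
    calc (0 : ℝ≥0∞) < ENNReal.ofReal c := by simpa using hc0
    _ = Filter.atTop.liminf (fun _ : ℕ => ENNReal.ofReal c) := (liminf_const _).symm
    _ ≤ Filter.atTop.liminf (fun N : ℕ => g N s) := liminf_le_liminf hev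
  -- integral of g N
  have hgint : ∀ N, ∫⁻ s in Set.Ioo (0:ℝ) δ, g N s
      = (∑ n ∈ Finset.range N, volume (C n)) / N := by
    intro N
    have hms : Measurable (fun s => ∑ n ∈ Finset.range N, (C n).indicator (1 : ℝ → ℝ≥0∞) s) :=
      Finset.measurable_sum _ fun n _ => measurable_const.indicator (hCopen n).measurableSet
    calc ∫⁻ s in Set.Ioo (0:ℝ) δ, g N s
        = (∫⁻ s in Set.Ioo (0:ℝ) δ,
            ∑ n ∈ Finset.range N, (C n).indicator (1 : ℝ → ℝ≥0∞) s) * ((N : ℝ≥0∞))⁻¹ := by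
          simp only [hg, div_eq_mul_inv]
          exact lintegral_mul_const _ hms
      _ = (∑ n ∈ Finset.range N,
            ∫⁻ s in Set.Ioo (0:ℝ) δ, (C n).indicator (1 : ℝ → ℝ≥0∞) s) * ((N : ℝ≥0∞))⁻¹ := by
          congr 1
          exact lintegral_finset_sum _
            (fun n _ => measurable_const.indicator (hCopen n).measurableSet)
      _ = (∑ n ∈ Finset.range N, volume (C n)) * ((N : ℝ≥0∞))⁻¹ := by
          congr 1
          refine Finset.sum_congr rfl fun n _ => ?_
          rw [lintegral_indicator_one (hCopen n).measurableSet,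
            Measure.restrict_apply (hCopen n).measurableSet,
            Set.inter_eq_self_of_subset_left (hCsub n)]
      _ = _ := by rw [div_eq_mul_inv]
  -- volumes of blocks vs the target measure
  set W : ℕ → ℝ≥0∞ := fun N => volume {t : ℝ | t ∈ Set.Icc 0 ((N : ℝ) * h) ∧ T t x ∈ U}
    with hW
  have hBW : ∀ N, (∑ n ∈ Finset.range N, volume (C n)) ≤ W N := by
    intro N
    have hsum : ∑ n ∈ Finset.range N, volume (C n) = ∑ n ∈ Finset.range N, volume (B n) :=
      Finset.sum_congr rfl fun n _ => hCvol n
    rw [hsum]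
    have hdisj : (↑(Finset.range N) : Set ℕ).PairwiseDisjoint B := by
      have key : ∀ m n : ℕ, m < n → Disjoint (B m) (B n) := by
        intro m n hlt
        rw [Set.disjoint_left]
        rintro t ⟨-, htm⟩ ⟨-, htn⟩
        have h1 : t < (m : ℝ) * h + δ := htm.2
        have h2 : ((n : ℝ)) * h < t := htn.1
        have h3 : (m : ℝ) + 1 ≤ (n : ℝ) := by exact_mod_cast hlt
        nlinarith
      intro m _ n _ hmn
      rcases lt_or_gt_of_ne hmn with hlt | hlt
      · exact key m n hlt
      · exact (key n m hlt).symm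
    have hUn := measure_biUnion_finset (μ := volume) hdisj (fun n _ => (hBopen n).measurableSet)
    rw [← hUn]
    apply measure_mono
    intro t ht
    simp only [Set.mem_iUnion] at ht
    obtain ⟨n, hn, htA, htI⟩ := ht
    simp only [Finset.mem_range] at hn
    have ht0 : (0:ℝ) < t := htA.1
    have htle : t ≤ (N : ℝ) * h := by
      have h1 : t < (n : ℝ) * h + δ := htI.2
      have h2 : (n : ℝ) + 1 ≤ (N : ℝ) := by exact_mod_cast hn
      nlinarith
    exact ⟨⟨ht0.le, htle⟩, htA.2⟩
  -- Fatou
  have hIpos : 0 < ∫⁻ s in Set.Ioo (0:ℝ) δ, Filter.atTop.liminf (fun N : ℕ => g N s) := by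
    have hfm : Measurable (fun s => Filter.atTop.liminf (fun N : ℕ => g N s)) :=
      Measurable.liminf hgmeas
    rw [lintegral_pos_iff_support hfm]
    have hsupp : Set.Ioo (0:ℝ) δ ⊆ Function.support
        (fun s => Filter.atTop.liminf (fun N : ℕ => g N s)) := by
      intro s hs
      exact (hgpos s hs).ne'
    calc (0 : ℝ≥0∞) < volume (Set.Ioo (0:ℝ) δ) := by
          rw [Real.volume_Ioo]; simpa using hδ0
      _ = (volume.restrict (Set.Ioo (0:ℝ) δ)) (Set.Ioo (0:ℝ) δ) := by
          rw [Measure.restrict_apply_self]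
      _ ≤ _ := measure_mono hsupp
  have hFatou : 0 < Filter.atTop.liminf (fun N : ℕ => W N / N) := by
    have h1 := lintegral_liminf_le (μ := volume.restrict (Set.Ioo (0:ℝ) δ)) (u := atTop) hgmeas
    have h2 : Filter.atTop.liminf (fun N : ℕ => ∫⁻ s in Set.Ioo (0:ℝ) δ, g N s)
        ≤ Filter.atTop.liminf (fun N : ℕ => W N / N) := by
      refine liminf_le_liminf ?_ ?_ ?_
      · filter_upwards with N
        rw [hgint N]
        exact ENNReal.div_le_div_right (hBW N) _
      · isBoundedDefault
      · isBoundedDefault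
    exact lt_of_lt_of_le hIpos (h1.trans h2)
  -- extract a real constant
  obtain ⟨r, hr0, hrlt⟩ := ENNReal.lt_iff_exists_nnreal_btwn.1 hFatou
  have hrpos : (0:ℝ) < (r : ℝ≥0).toReal := by exact_mod_cast ENNReal.coe_pos.1 hr0
  have hev : ∀ᶠ N in (atTop : Filter ℕ), (r : ℝ≥0∞) < W N / N :=
    eventually_lt_of_lt_liminf hrlt (isBoundedUnder_of ⟨0, fun N => zero_le⟩)
  -- the target function
  set F : ℝ → ℝ := fun S => (volume {t : ℝ | t ∈ Set.Icc 0 S ∧ T t x ∈ U}).toReal / S with hF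
  have hFbound : ∀ S, F S ≤ 1 := by
    intro S
    rcases le_or_gt S 0 with hS | hS
    · have hz : volume {t : ℝ | t ∈ Set.Icc 0 S ∧ T t x ∈ U} = 0 := by
        refine measure_mono_null (fun t ht => ht.1) ?_
        rw [Real.volume_Icc]
        simp only [ENNReal.ofReal_eq_zero]
        linarith
      rw [hF]
      simp only [hz, ENNReal.toReal_zero, zero_div]
      exact zero_le_one
    · have hle : volume {t : ℝ | t ∈ Set.Icc 0 S ∧ T t x ∈ U} ≤ ENNReal.ofReal S := by
        refine le_trans (measure_mono fun t ht => ht.1) ?_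
        rw [Real.volume_Icc]; simp
      rw [hF]
      apply div_le_one_of_le₀ _ hS.le
      calc (volume {t : ℝ | t ∈ Set.Icc 0 S ∧ T t x ∈ U}).toReal
          ≤ (ENNReal.ofReal S).toReal := ENNReal.toReal_mono ENNReal.ofReal_ne_top hle
        _ = S := ENNReal.toReal_ofReal hS.le
  -- the key lower bound at times N*h
  have hFlow : ∀ᶠ N : ℕ in atTop, (r : ℝ≥0).toReal / h ≤ F (N * h) := by
    filter_upwards [hev, eventually_gt_atTop 0] with N hN hN0
    have hNne : ((N : ℝ≥0∞)) ≠ 0 := by exact_mod_cast hN0.ne'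
    have hNtop : ((N : ℝ≥0∞)) ≠ ⊤ := by simp
    have hmul : (r : ℝ≥0∞) * N < W N := by
      rwa [ENNReal.lt_div_iff_mul_lt (Or.inl hNne) (Or.inl hNtop)] at hN
    have hWfin : W N ≤ ENNReal.ofReal ((N : ℝ) * h) := by
      refine le_trans (measure_mono fun t ht => ht.1) ?_
      rw [Real.volume_Icc]; simp
    have hWne : W N ≠ ⊤ := (hWfin.trans_lt ENNReal.ofReal_lt_top).ne
    have htr : (r : ℝ≥0).toReal * N ≤ (W N).toReal := by
      have h4 : ((r : ℝ≥0∞) * N).toReal ≤ (W N).toReal :=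
        ENNReal.toReal_mono hWne hmul.le
      simpa [ENNReal.toReal_mul] using h4
    have hNh : (0:ℝ) < (N : ℝ) * h := by positivity
    have hFval : F ((N : ℝ) * h) = (W N).toReal / ((N : ℝ) * h) := by
      rw [hF, hW]
    rw [hFval]
    have heq2 : (r : ℝ≥0).toReal / h = ((r : ℝ≥0).toReal * N) / ((N : ℝ) * h) := by
      field_simp
    rw [heq2]
    gcongr
  -- conclude via frequently
  have hfreq : ∃ᶠ S in (atTop : Filter ℝ), (r : ℝ≥0).toReal / h ≤ F S := by
    obtain ⟨N₀, hN₀⟩ := eventually_atTop.1 hFlow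
    rw [frequently_atTop]
    intro a
    obtain ⟨N, hN1, hN2⟩ : ∃ N : ℕ, N₀ ≤ N ∧ a ≤ (N : ℝ) * h := by
      refine ⟨max N₀ ⌈a / h⌉₊, le_max_left _ _, ?_⟩
      have h1 : a / h ≤ (⌈a / h⌉₊ : ℝ) := Nat.le_ceil _
      have h2 : ((⌈a / h⌉₊ : ℕ) : ℝ) ≤ ((max N₀ ⌈a / h⌉₊ : ℕ) : ℝ) := by
        exact_mod_cast le_max_right _ _
      calc a = (a / h) * h := by field_simp
        _ ≤ _ := by nlinarith
    exact ⟨(N : ℝ) * h, hN2, hN₀ N hN1⟩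
  have hbdd : (atTop : Filter ℝ).IsBoundedUnder (· ≤ ·) F := isBoundedUnder_of ⟨1, hFbound⟩
  have hfin := le_limsup_of_frequently_le hfreq hbdd
  calc (0:ℝ) < (r : ℝ≥0).toReal / h := by positivity
    _ ≤ _ := hfin
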